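/- Let x=0 be an equilibrium of the Riemann–Liouville system, with ν∈(0,1]. Suppose there exist V:(hℕ)_a×ℝⁿ→ℝ and class-K functions γ₁, γ₂, γ₃ such that γ₁(‖z‖) ≤ V(t,z) ≤ γ₂(‖z‖) for all t∈(hℕ)_a and z∈ℝⁿ, and such that along every solution x of the system, (_aΔ_h^ν V)(t,x(t)) ≤ −γ₃(‖x(t+νh)‖) for all t∈(hℕ)_{a+(1−ν)h}. Then the equilibrium x=0 of the Riemann–Liouville system is asymptotically stable. -/

import Mathlib

open Finset Filter Matrix

/-- The `h`-factorial function `t_h^(ν) = h^ν Γ(t/h+1)/Γ(t/h+1-ν)`. -/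
noncomputable def hfact (h t ν : ℝ) : ℝ :=
  h ^ ν * Real.Gamma (t / h + 1) / Real.Gamma (t / h + 1 - ν)

/-- The forward `h`-difference operator. -/
noncomputable def fdiff (h : ℝ) (y : ℝ → ℝ) (t : ℝ) : ℝ := (y (t + h) - y t) / h

/-- The fractional `h`-sum of order `μ > 0` of `y : (hℕ)_a → ℝ`, evaluated at the
grid point `t = a + μh + k·h` of `(hℕ)_{a+μh}`. -/
noncomputable def hSum (h a μ : ℝ) (y : ℝ → ℝ) (k : ℕ) : ℝ :=
  (h / Real.Gamma μ) *
    ∑ j ∈ Finset.range (k + 1),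
      hfact h (a + μ * h + (k : ℝ) * h - (a + (j : ℝ) * h + h)) (μ - 1) * y (a + (j : ℝ) * h)

/-- The Riemann–Liouville-like `h`-difference of order `ν ∈ (0,1]` of `y : (hℕ)_a → ℝ`,
evaluated at the grid point `t = a + (1-ν)h + k·h` of `(hℕ)_{a+(1-ν)h}`:
for `ν ∈ (0,1)` it is `Δ_h` applied to the `(1-ν)`-fractional `h`-sum. -/
noncomputable def rlD (h a ν : ℝ) (y : ℝ → ℝ) (k : ℕ) : ℝ :=
  if ν = 1 then fdiff h y (a + (k : ℝ) * h)
  else (hSum h a (1 - ν) y (k + 1) - hSum h a (1 - ν) y k) / h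

/-- `x : (hℕ)_a → ℝⁿ` is a solution of the Riemann–Liouville system
`(_aΔ_h^ν x)(t) = f(t, x(t+νh))` on `(hℕ)_{a+(1-ν)h}` (componentwise). -/
def IsRLSol {n : ℕ} (h a ν : ℝ) (f : ℝ → (Fin n → ℝ) → (Fin n → ℝ))
    (x : ℝ → Fin n → ℝ) : Prop :=
  ∀ (k : ℕ) (i : Fin n),
    rlD h a ν (fun t => x t i) k
      = f (a + (1 - ν) * h + (k : ℝ) * h) (x (a + ((k : ℝ) + 1) * h)) i

/-- A class-K function: continuous on `[0,∞)`, vanishing at `0`, strictly increasing,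
and mapping `[0,∞)` into `[0,∞)`. -/
def IsClassK (γ : ℝ → ℝ) : Prop :=
  ContinuousOn γ (Set.Ici 0) ∧ γ 0 = 0 ∧ StrictMonoOn γ (Set.Ici 0) ∧
    ∀ r ∈ Set.Ici (0 : ℝ), 0 ≤ γ r

/-! ### Auxiliary lemmas -/

lemma classK_pos {γ : ℝ → ℝ} (hγ : IsClassK γ) {ε : ℝ} (hε : 0 < ε) : 0 < γ ε := by
  have := hγ.2.2.1 (Set.self_mem_Ici) (le_of_lt hε : (0:ℝ) ≤ ε) hε
  rw [hγ.2.1] at this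
  exact this

lemma classK_lt {γ : ℝ → ℝ} (hγ : IsClassK γ) {r ε : ℝ} (hr : 0 ≤ r) (hε : 0 ≤ ε)
    (hlt : γ r < γ ε) : r < ε := by
  by_contra hle
  push_neg at hle
  exact absurd (hγ.2.2.1.monotoneOn hε hr hle) (not_le.2 hlt)

/-- Explicit form of the fractional `h`-sum of order `1-ν`. -/
lemma hSum_eq (h a ν : ℝ) (hh : 0 < h) (y : ℝ → ℝ) (k : ℕ) :
    hSum h a (1 - ν) y k =
      (h * h ^ (-ν) / Real.Gamma (1 - ν)) *
        ∑ j ∈ Finset.range (k + 1),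
          (Real.Gamma ((k : ℝ) - j + 1 - ν) / Real.Gamma ((k : ℝ) - j + 1)) *
            y (a + (j : ℝ) * h) := by
  unfold hSum hfact
  rw [Finset.mul_sum, Finset.mul_sum]
  refine Finset.sum_congr rfl fun j hj => ?_
  have h1 : (a + (1 - ν) * h + (k : ℝ) * h - (a + (j : ℝ) * h + h)) / h
      = (k : ℝ) - j - ν := by
    field_simp
    ring
  rw [h1]
  have h2 : (1 : ℝ) - ν - 1 = -ν := by ring
  rw [h2]
  have h3 : (k : ℝ) - j - ν + 1 = (k : ℝ) - j + 1 - ν := by ring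
  rw [h3]
  have h4 : (k : ℝ) - j + 1 - ν - -ν = (k : ℝ) - j + 1 := by ring
  rw [h4]
  ring

/-- Abstract Lyapunov decrease lemma. -/
lemma key_lemma (h C : ℝ) (hh : 0 < h) (hC : 0 < C) (S v w : ℕ → ℝ)
    (hstep : ∀ k, S (k + 1) ≤ S k - h * w (k + 1))
    (hw : ∀ k, 0 ≤ w k)
    (hlow : ∀ k, C * v k ≤ S k)
    (hS0 : S 0 ≤ C * v 0)
    (hv : ∀ k, 0 ≤ v k) :
    (∀ k, v k ≤ v 0) ∧ Tendsto (fun k => w (k + 1)) atTop (nhds 0) := by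
  have hSanti : ∀ k, S (k + 1) ≤ S k := fun k => by
    have := hstep k; have := hw (k + 1); nlinarith
  have hSle : ∀ k, S k ≤ S 0 := by
    intro k
    induction k with
    | zero => exact le_refl _
    | succ m ih => exact le_trans (hSanti m) ih
  have hSpos : ∀ k, 0 ≤ S k := fun k =>
    le_trans (mul_nonneg hC.le (hv k)) (hlow k)
  constructor
  · intro k
    have h1 : C * v k ≤ C * v 0 := le_trans (hlow k) (le_trans (hSle k) hS0)
    exact (mul_le_mul_iff_right₀ hC).mp h1
  · have hsum : ∀ N, h * ∑ m ∈ Finset.range N, w (m + 1) ≤ S 0 - S N := by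
      intro N
      induction N with
      | zero => simp
      | succ m ih =>
        rw [Finset.sum_range_succ, mul_add]
        have := hstep m
        linarith
    have hbound : ∀ N, ∑ m ∈ Finset.range N, w (m + 1) ≤ S 0 / h := by
      intro N
      rw [le_div_iff₀ hh]
      have := hsum N
      have := hSpos N
      linarith [mul_comm h (∑ m ∈ Finset.range N, w (m + 1))]
    have hsummable : Summable (fun m => w (m + 1)) :=
      summable_of_sum_range_le (fun m => hw (m + 1)) hbound
    exact hsummable.tendsto_atTop_zero

theorem stmt9 {n : ℕ} (hn : 1 ≤ n) (h a ν : ℝ) (hh : 0 < h) (hν0 : 0 < ν) (hν1 : ν ≤ 1)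
    (f : ℝ → (Fin n → ℝ) → (Fin n → ℝ))
    (hf0 : ∀ k : ℕ, f (a + (1 - ν) * h + (k : ℝ) * h) 0 = 0)
    (V : ℝ → (Fin n → ℝ) → ℝ) (γ₁ γ₂ γ₃ : ℝ → ℝ)
    (hγ₁ : IsClassK γ₁) (hγ₂ : IsClassK γ₂) (hγ₃ : IsClassK γ₃)
    (hV : ∀ (k : ℕ) (z : Fin n → ℝ),
      γ₁ ‖z‖ ≤ V (a + (k : ℝ) * h) z ∧ V (a + (k : ℝ) * h) z ≤ γ₂ ‖z‖)
    (hdec : ∀ x : ℝ → Fin n → ℝ, IsRLSol h a ν f x →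
      ∀ k : ℕ, rlD h a ν (fun t => V t (x t)) k ≤ -γ₃ ‖x (a + ((k : ℝ) + 1) * h)‖) :
    (∀ ε > (0 : ℝ), ∃ δ > (0 : ℝ), ∀ x : ℝ → Fin n → ℝ,
      IsRLSol h a ν f x → ‖x a‖ < δ → ∀ k : ℕ, ‖x (a + (k : ℝ) * h)‖ < ε) ∧
    (∃ δ > (0 : ℝ), ∀ x : ℝ → Fin n → ℝ,
      IsRLSol h a ν f x → ‖x a‖ < δ →
        Tendsto (fun k : ℕ => x (a + (k : ℝ) * h)) atTop (nhds 0)) := by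
  -- Core analysis of an arbitrary solution.
  have core : ∀ x : ℝ → Fin n → ℝ, IsRLSol h a ν f x →
      (∀ k : ℕ, γ₁ ‖x (a + (k : ℝ) * h)‖ ≤ γ₂ ‖x a‖) ∧
      Tendsto (fun k : ℕ => ‖x (a + (k : ℝ) * h)‖) atTop (nhds 0) := by
    intro x hx
    set g : ℕ → ℝ := fun k => ‖x (a + (k : ℝ) * h)‖ with hg
    set v : ℕ → ℝ := fun k => V (a + (k : ℝ) * h) (x (a + (k : ℝ) * h)) with hvdef
    set w : ℕ → ℝ := fun k => γ₃ (g k) with hwdef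
    have hgnn : ∀ k, 0 ≤ g k := fun k => norm_nonneg _
    have hvlow : ∀ k, γ₁ (g k) ≤ v k := fun k => (hV k _).1
    have hvhigh : ∀ k, v k ≤ γ₂ (g k) := fun k => (hV k _).2
    have hvnn : ∀ k, 0 ≤ v k := fun k =>
      le_trans (hγ₁.2.2.2 _ (hgnn k)) (hvlow k)
    have hwnn : ∀ k, 0 ≤ w k := fun k => hγ₃.2.2.2 _ (hgnn k)
    have hd : ∀ k : ℕ, rlD h a ν (fun t => V t (x t)) k ≤ -w (k + 1) := by
      intro k
      have hthis := hdec x hx k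
      simp only [hwdef, hg]
      push_cast
      exact hthis
    -- Produce the Lyapunov data (S, C) by cases on ν = 1.
    have main : (∀ k, v k ≤ v 0) ∧ Tendsto (fun k => w (k + 1)) atTop (nhds 0) := by
      by_cases hν : ν = 1
      · -- ν = 1 : S = v, C = 1
        refine key_lemma h 1 hh one_pos v v w ?_ hwnn (fun k => by simp) (by simp) hvnn
        intro k
        have := hd k
        simp only [rlD, if_pos hν] at this
        have he : a + (k : ℝ) * h + h = a + ((k + 1 : ℕ) : ℝ) * h := by push_cast; ring
        rw [fdiff, he] at this
        have := (div_le_iff₀ hh).mp this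
        simp only [hvdef]
        linarith
      · -- ν < 1 : S = fractional h-sum, C = h * h^(-ν)
        have hν1' : ν < 1 := lt_of_le_of_ne hν1 hν
        have hG : 0 < Real.Gamma (1 - ν) := Real.Gamma_pos_of_pos (by linarith)
        have hCpos : 0 < h * h ^ (-ν) :=
          mul_pos hh (Real.rpow_pos_of_pos hh _)
        set S : ℕ → ℝ := fun k => hSum h a (1 - ν) (fun t => V t (x t)) k with hSdef
        have hSexp : ∀ k, S k = (h * h ^ (-ν) / Real.Gamma (1 - ν)) *
            ∑ j ∈ Finset.range (k + 1),
              (Real.Gamma ((k : ℝ) - j + 1 - ν) / Real.Gamma ((k : ℝ) - j + 1)) * v j := by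
          intro k
          rw [hSdef]
          exact hSum_eq h a ν hh _ k
        refine key_lemma h (h * h ^ (-ν)) hh hCpos S v w ?_ hwnn ?_ ?_ hvnn
        · intro k
          have := hd k
          simp only [rlD, if_neg hν] at this
          have := (div_le_iff₀ hh).mp this
          simp only [hSdef]
          linarith
        · intro k
          rw [hSexp k, Finset.sum_range_succ]
          have hterm : (Real.Gamma ((k : ℝ) - k + 1 - ν) / Real.Gamma ((k : ℝ) - k + 1)) * v k
              = Real.Gamma (1 - ν) * v k := by
            have : (k : ℝ) - k + 1 - ν = 1 - ν := by ring
            rw [this]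
            have : (k : ℝ) - k + 1 = 1 := by ring
            rw [this, Real.Gamma_one]
            ring
          rw [hterm]
          have hrest : 0 ≤ ∑ j ∈ Finset.range k,
              (Real.Gamma ((k : ℝ) - j + 1 - ν) / Real.Gamma ((k : ℝ) - j + 1)) * v j := by
            refine Finset.sum_nonneg fun j hj => ?_
            have hjk : (j : ℝ) ≤ k := by
              exact_mod_cast Nat.le_of_lt (Finset.mem_range.mp hj)
            have h1 : 0 < Real.Gamma ((k : ℝ) - j + 1 - ν) :=
              Real.Gamma_pos_of_pos (by linarith)
            have h2 : 0 < Real.Gamma ((k : ℝ) - j + 1) :=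
              Real.Gamma_pos_of_pos (by linarith)
            exact mul_nonneg (div_nonneg h1.le h2.le) (hvnn j)
          rw [mul_add]
          have hconst : (h * h ^ (-ν) / Real.Gamma (1 - ν)) * (Real.Gamma (1 - ν) * v k)
              = (h * h ^ (-ν)) * v k := by
            field_simp
          rw [hconst]
          nlinarith [mul_nonneg (div_nonneg hCpos.le hG.le) hrest]
        · have hS0eq : S 0 = (h * h ^ (-ν)) * v 0 := by
            rw [hSexp 0, Finset.range_one, Finset.sum_singleton]
            norm_num [Real.Gamma_one]
            field_simp
          exact le_of_eq hS0eq
    have hg0 : g 0 = ‖x a‖ := by simp [hg]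
    constructor
    · intro k
      calc γ₁ (g k) ≤ v k := hvlow k
        _ ≤ v 0 := main.1 k
        _ ≤ γ₂ (g 0) := hvhigh 0
        _ = γ₂ ‖x a‖ := by rw [hg0]
    · -- w (k+1) → 0 implies g (k+1) → 0 implies g → 0
      have hgtend : Tendsto (fun k => g (k + 1)) atTop (nhds 0) := by
        refine Metric.tendsto_atTop.2 fun ε hε => ?_
        have hγ3ε : 0 < γ₃ ε := classK_pos hγ₃ hε
        have hev : ∀ᶠ k in atTop, w (k + 1) < γ₃ ε :=
          (tendsto_order.1 main.2).2 (γ₃ ε) hγ3ε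
        obtain ⟨N, hN⟩ := eventually_atTop.mp hev
        refine ⟨N, fun k hk => ?_⟩
        have hlt : g (k + 1) < ε := classK_lt hγ₃ (hgnn (k + 1)) hε.le (hN k hk)
        rw [Real.dist_eq, sub_zero, abs_of_nonneg (hgnn (k + 1))]
        exact hlt
      exact (tendsto_add_atTop_iff_nat 1).mp hgtend
  constructor
  · -- stability
    intro ε hε
    have hγ1ε : 0 < γ₁ ε := classK_pos hγ₁ hε
    have hcont : ContinuousWithinAt γ₂ (Set.Ici 0) 0 := hγ₂.1 0 Set.self_mem_Ici
    obtain ⟨δ, hδpos, hδ⟩ := Metric.continuousWithinAt_iff.mp hcont (γ₁ ε) hγ1ε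
    refine ⟨δ, hδpos, fun x hx hxa k => ?_⟩
    have hγ2 : γ₂ ‖x a‖ < γ₁ ε := by
      have hmem : ‖x a‖ ∈ Set.Ici (0 : ℝ) := norm_nonneg _
      have hdist : dist ‖x a‖ 0 < δ := by
        rw [Real.dist_eq, sub_zero, abs_of_nonneg (norm_nonneg _)]; exact hxa
      have := hδ hmem hdist
      rw [Real.dist_eq, hγ₂.2.1, sub_zero] at this
      exact lt_of_le_of_lt (le_abs_self _) this
    have hchain : γ₁ ‖x (a + (k : ℝ) * h)‖ < γ₁ ε :=
      lt_of_le_of_lt ((core x hx).1 k) hγ2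
    exact classK_lt hγ₁ (norm_nonneg _) hε.le hchain
  · -- attractivity
    refine ⟨1, one_pos, fun x hx _ => ?_⟩
    exact tendsto_zero_iff_norm_tendsto_zero.mpr ((core x hx).2)
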